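/- Let p be prime, f ∈ F_p[X] monic of degree n' dividing X^n - 1 with n' < n, and write f = X^{n'} + a_ℓ X^ℓ + lower terms (with a_ℓ ≠ 0 the second-highest nonzero coefficient). Let g = (X^n - 1)/f = X^{n-n'} + b_r X^r + lower terms (b_r ≠ 0 the second-highest nonzero coefficient). Then r + n' = n - n' + ℓ. -/

import Mathlib

theorem stmt_7 (p n n' ℓ r : ℕ) [Fact p.Prime] (hn'pos : 1 ≤ n') (hn : n' < n)
    (f g : Polynomial (ZMod p)) (hf : f.Monic) (hfdeg : f.natDegree = n')
    (hfg : f * g = Polynomial.X ^ n - 1)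
    (hℓ : ℓ < n') (hℓne : f.coeff ℓ ≠ 0)
    (hℓtop : ∀ i, ℓ < i → i < n' → f.coeff i = 0)
    (hr : r < n - n') (hrne : g.coeff r ≠ 0)
    (hrtop : ∀ i, r < i → i < n - n' → g.coeff i = 0) :
    r + n' = n - n' + ℓ := by
  set m := n - n' with hm
  have hfne : f ≠ 0 := hf.ne_zero
  have hXn : (Polynomial.X ^ n - 1 : Polynomial (ZMod p)).Monic := by
    simpa using Polynomial.monic_X_pow_sub_C (1 : ZMod p) (by omega : n ≠ 0)
  have hgne : g ≠ 0 := by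
    intro h; rw [h, mul_zero] at hfg; exact hXn.ne_zero hfg.symm
  have hdeg : (Polynomial.X ^ n - 1 : Polynomial (ZMod p)).natDegree = n := by
    simpa using Polynomial.natDegree_X_pow_sub_C (n := n) (r := (1 : ZMod p))
  have hgmon : g.Monic := hf.of_mul_monic_left (by rw [hfg]; exact hXn)
  have hgdeg : g.natDegree = m := by
    have h := Polynomial.natDegree_mul hfne hgne
    rw [hfg, hdeg, hfdeg] at h; omega
  have hf_hi : ∀ i, n' < i → f.coeff i = 0 := fun i hi =>
    Polynomial.coeff_eq_zero_of_natDegree_lt (hfdeg ▸ hi)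
  have hg_hi : ∀ j, m < j → g.coeff j = 0 := fun j hj =>
    Polynomial.coeff_eq_zero_of_natDegree_lt (hgdeg ▸ hj)
  have hfn' : f.coeff n' = 1 := by rw [← hfdeg]; exact hf.coeff_natDegree
  have hgm : g.coeff m = 1 := by rw [← hgdeg]; exact hgmon.coeff_natDegree
  have hcoeff : ∀ k, 0 < k → k < n → (f * g).coeff k = 0 := by
    intro k hk0 hkn
    rw [hfg, Polynomial.coeff_sub, Polynomial.coeff_X_pow, Polynomial.coeff_one]
    simp [hk0.ne']
    omega
  have h1 : r + n' ≤ m + ℓ := by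
    by_contra hcon
    push_neg at hcon
    have hk := hcoeff (r + n') (by omega) (by omega)
    rw [Polynomial.coeff_mul] at hk
    rw [Finset.sum_eq_single_of_mem ((n', r)) (by simp [Finset.mem_antidiagonal, Nat.add_comm])
      (fun c hc hne => ?_)] at hk
    · simp [hfn'] at hk; exact hrne hk
    · simp only [Finset.HasAntidiagonal.mem_antidiagonal] at hc
      obtain ⟨i, j⟩ := c
      simp only at hc ⊢
      rcases lt_trichotomy i n' with h | h | h
      · rcases le_or_gt i ℓ with h' | h'
        · rw [hg_hi j (by omega), mul_zero]
        · rw [hℓtop i h' h, zero_mul]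
      · exfalso; apply hne; simp only [Prod.mk.injEq]; omega
      · rw [hf_hi i h, zero_mul]
  have h2 : m + ℓ ≤ r + n' := by
    by_contra hcon
    push_neg at hcon
    have hk := hcoeff (m + ℓ) (by omega) (by omega)
    rw [Polynomial.coeff_mul] at hk
    rw [Finset.sum_eq_single_of_mem ((ℓ, m)) (by simp [Finset.mem_antidiagonal, Nat.add_comm])
      (fun c hc hne => ?_)] at hk
    · rw [hgm, mul_one] at hk; exact hℓne hk
    · simp only [Finset.HasAntidiagonal.mem_antidiagonal] at hc
      obtain ⟨i, j⟩ := c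
      simp only at hc ⊢
      rcases lt_trichotomy i n' with h | h | h
      · rcases lt_trichotomy i ℓ with h' | h' | h'
        · rw [hg_hi j (by omega), mul_zero]
        · exfalso; apply hne; simp only [Prod.mk.injEq]; omega
        · rw [hℓtop i h' h, zero_mul]
      · rw [hrtop j (by omega) (by omega), mul_zero]
      · rw [hf_hi i h, zero_mul]
  omega
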